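/- Let p be a prime and G a finite p-group. Then the following three statements are equivalent: (i) the enhanced power graph of G is cyclically separable; (ii) ∂(G) ≥ 3; (iii) one of the following holds: (a) p > 3 and G is non-cyclic, (b) p = 3 and G has at least two maximal cyclic subgroups of order greater than 3, (c) p = 2 and either G has at least two maximal cyclic subgroups of order greater than 4, or G has at least two maximal cyclic subgroups of order greater than 2 with trivial intersection. -/

import Mathlib

/-- The power graph of a group `G`: distinct `x, y` are adjacent iff one is a power
of the other. -/
def powerGraph (G : Type*) [Group G] : SimpleGraph G where
  Adj x y := x ≠ y ∧ (x ∈ Subgroup.zpowers y ∨ y ∈ Subgroup.zpowers x)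
  symm := ⟨fun _ _ h => ⟨h.1.symm, h.2.symm⟩⟩
  loopless := ⟨fun _ h => h.1 rfl⟩

/-- The enhanced power graph of a group `G`: distinct `x, y` are adjacent iff they
lie in a common cyclic subgroup. -/
def enhancedPowerGraph (G : Type*) [Group G] : SimpleGraph G where
  Adj x y := x ≠ y ∧ ∃ z : G, x ∈ Subgroup.zpowers z ∧ y ∈ Subgroup.zpowers z
  symm := ⟨fun _ _ h => ⟨h.1.symm, h.2.choose, h.2.choose_spec.2, h.2.choose_spec.1⟩⟩
  loopless := ⟨fun _ h => h.1 rfl⟩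

/-- A subgroup is a maximal cyclic subgroup if it is cyclic and not properly contained
in any other cyclic subgroup. -/
def IsMaximalCyclic {G : Type*} [Group G] (M : Subgroup G) : Prop :=
  (∃ x : G, M = Subgroup.zpowers x) ∧
    ∀ N : Subgroup G, (∃ y : G, N = Subgroup.zpowers y) → M ≤ N → M = N

/-- The difference number `∂(G)`: the maximum of
`min (|M \ N|, |N \ M|)` over pairs of maximal cyclic subgroups `M, N`. -/
noncomputable def diffNumber (G : Type*) [Group G] : ℕ :=
  sSup { n : ℕ | ∃ M N : Subgroup G, IsMaximalCyclic M ∧ IsMaximalCyclic N ∧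
    n = min (((M : Set G) \ (N : Set G)).ncard) (((N : Set G) \ (M : Set G)).ncard) }

/-- A graph has a cycle. -/
def HasCycle {V : Type*} (Γ : SimpleGraph V) : Prop :=
  ∃ (v : V) (w : Γ.Walk v v), w.IsCycle

/-- `S` is a cyclic vertex cutset of `Γ` if `Γ - S` is disconnected and at least two
of its connected components contain a cycle. -/
def IsCyclicVertexCutset {V : Type*} (Γ : SimpleGraph V) (S : Set V) : Prop :=
  ¬ (Γ.induce Sᶜ).Connected ∧
    ∃ u v : ↥Sᶜ, ¬ (Γ.induce Sᶜ).Reachable u v ∧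
      (∃ w : (Γ.induce Sᶜ).Walk u u, w.IsCycle) ∧
      (∃ w : (Γ.induce Sᶜ).Walk v v, w.IsCycle)

/-- A graph is cyclically separable if it has a cyclic vertex cutset. -/
def CyclicallySeparable {V : Type*} (Γ : SimpleGraph V) : Prop :=
  ∃ S : Set V, IsCyclicVertexCutset Γ S

/-- The cyclic vertex connectivity: the minimum cardinality of a cyclic vertex cutset,
`⊤ = ∞` if there is none. -/
noncomputable def cyclicVertexConnectivity {V : Type*} (Γ : SimpleGraph V) : ℕ∞ :=
  ⨅ S ∈ {S : Set V | IsCyclicVertexCutset Γ S}, (S.ncard : ℕ∞)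

/-- The vertex connectivity: the minimum number of vertices whose deletion results in a
disconnected or trivial graph. -/
noncomputable def vertexConnectivity {V : Type*} (Γ : SimpleGraph V) : ℕ :=
  sInf { n : ℕ | ∃ S : Set V, S.ncard = n ∧
    ((Sᶜ : Set V).Subsingleton ∨ ¬ (Γ.induce Sᶜ).Connected) }


open Subgroup

section Helpers

variable {G : Type*} [Group G]

lemma epg_adj {x y : G} :
    (enhancedPowerGraph G).Adj x y ↔
      x ≠ y ∧ ∃ z : G, x ∈ Subgroup.zpowers z ∧ y ∈ Subgroup.zpowers z := Iff.rfl

lemma isCyclic_zpowers (g : G) : IsCyclic ↥(zpowers g) := by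
  refine ⟨⟨g, mem_zpowers g⟩, fun x => ?_⟩
  obtain ⟨k, hk⟩ := Subgroup.mem_zpowers_iff.mp x.2
  exact ⟨k, Subtype.ext (by simpa using hk)⟩

lemma mem_zpowers_of_pow_orderOf [Finite G] {x y z : G}
    (hx : x ∈ zpowers z) (hy : y ∈ zpowers z) (h : x ^ orderOf y = 1) :
    x ∈ zpowers y := by
  classical
  haveI : Fintype ↥(zpowers z) := Fintype.ofFinite _
  haveI : IsCyclic ↥(zpowers z) := _root_.isCyclic_zpowers z
  set x' : ↥(zpowers z) := ⟨x, hx⟩ with hx'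
  set y' : ↥(zpowers z) := ⟨y, hy⟩ with hy'
  have hoy : orderOf y = orderOf y' :=
    orderOf_injective (zpowers z).subtype (Subgroup.subtype_injective _) y'
  have hn : 0 < orderOf y := orderOf_pos y
  set T : Finset ↥(zpowers z) := Finset.univ.filter (fun a => a ^ orderOf y = 1) with hT'
  have hT : T.card ≤ orderOf y := IsCyclic.card_pow_eq_one_le hn
  set Z : Finset ↥(zpowers z) := Finset.univ.filter (fun a => a ∈ zpowers y') with hZ'
  have hy1 : y' ^ (orderOf y) = 1 := by
    rw [hoy]; exact pow_orderOf_eq_one y'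
  have hZT : Z ⊆ T := by
    intro w hw
    simp only [hZ', hT', Finset.mem_filter, Finset.mem_univ, true_and] at hw ⊢
    obtain ⟨k, hk⟩ := Subgroup.mem_zpowers_iff.mp hw
    rw [← hk]
    calc (y' ^ k) ^ (orderOf y) = (y' ^ (orderOf y)) ^ k := by
          rw [← zpow_natCast (y' ^ k), ← zpow_mul, mul_comm, zpow_mul, zpow_natCast]
      _ = 1 := by rw [hy1, one_zpow]
  have hZcard : orderOf y ≤ Z.card := by
    have hinj : Set.InjOn (y' ^ ·) (Set.Iio (orderOf y')) := pow_injOn_Iio_orderOf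
    have himage : (Finset.range (orderOf y')).image (y' ^ ·) ⊆ Z := by
      intro w hw
      simp only [Finset.mem_image, Finset.mem_range] at hw
      obtain ⟨i, _, rfl⟩ := hw
      simp only [hZ', Finset.mem_filter, Finset.mem_univ, true_and]
      exact ⟨(i : ℤ), by simp⟩
    calc orderOf y = orderOf y' := hoy
      _ = ((Finset.range (orderOf y')).image (y' ^ ·)).card := by
          rw [Finset.card_image_of_injOn (fun a ha b hb hab =>
            hinj (by simpa using ha) (by simpa using hb) hab), Finset.card_range]
      _ ≤ Z.card := Finset.card_le_card himage
  have hZeqT : Z = T := Finset.eq_of_subset_of_card_le hZT (hT.trans hZcard)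
  have hxT : x' ∈ T := by
    simp only [hT', Finset.mem_filter, Finset.mem_univ, true_and]
    exact Subtype.ext (by simpa using h)
  have hxZ : x' ∈ Z := hZeqT ▸ hxT
  simp only [hZ', Finset.mem_filter, Finset.mem_univ, true_and] at hxZ
  obtain ⟨k, hk⟩ := Subgroup.mem_zpowers_iff.mp hxZ
  refine ⟨k, ?_⟩
  have := congrArg (Subtype.val) hk
  simpa using this

lemma zpowers_comparable [Finite G] {p : ℕ} (hp : p.Prime) (hG : IsPGroup p G)
    {x y z : G} (hx : x ∈ zpowers z) (hy : y ∈ zpowers z) :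
    x ∈ zpowers y ∨ y ∈ zpowers x := by
  haveI : Fact p.Prime := ⟨hp⟩
  obtain ⟨a, ha⟩ := IsPGroup.iff_orderOf.mp hG x
  obtain ⟨b, hb⟩ := IsPGroup.iff_orderOf.mp hG y
  rcases le_total a b with hab | hab
  · left
    apply mem_zpowers_of_pow_orderOf hx hy
    rw [hb]
    calc x ^ p ^ b = (x ^ p ^ a) ^ p ^ (b - a) := by
          rw [← pow_mul, ← pow_add, Nat.add_sub_cancel' hab]
      _ = 1 := by rw [← ha, pow_orderOf_eq_one, one_pow]
  · right
    apply mem_zpowers_of_pow_orderOf hy hx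
    rw [ha]
    calc y ^ p ^ a = (y ^ p ^ b) ^ p ^ (a - b) := by
          rw [← pow_mul, ← pow_add, Nat.add_sub_cancel' hab]
      _ = 1 := by rw [← hb, pow_orderOf_eq_one, one_pow]

lemma epg_adj_iff [Finite G] {p : ℕ} (hp : p.Prime) (hG : IsPGroup p G) {x y : G} :
    (enhancedPowerGraph G).Adj x y ↔ x ≠ y ∧ (x ∈ zpowers y ∨ y ∈ zpowers x) := by
  rw [epg_adj]
  constructor
  · rintro ⟨hne, z, hxz, hyz⟩
    exact ⟨hne, zpowers_comparable hp hG hxz hyz⟩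
  · rintro ⟨hne, h | h⟩
    · exact ⟨hne, y, h, mem_zpowers y⟩
    · exact ⟨hne, x, mem_zpowers x, h⟩

lemma exists_isMaximalCyclic_mem [Finite G] (x : G) :
    ∃ M : Subgroup G, IsMaximalCyclic M ∧ x ∈ M := by
  haveI : Finite (Subgroup G) :=
    Finite.of_injective (fun H : Subgroup G => (H : Set G)) SetLike.coe_injective
  obtain ⟨M, hM, hmax⟩ := Set.Finite.exists_maximalFor (id : Subgroup G → Subgroup G)
    {N : Subgroup G | (∃ y, N = zpowers y) ∧ x ∈ N} (Set.toFinite _)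
    ⟨zpowers x, ⟨x, rfl⟩, mem_zpowers x⟩
  exact ⟨M, ⟨hM.1, fun N hN hle => le_antisymm hle (hmax ⟨hN, hle hM.2⟩ hle)⟩, hM.2⟩

lemma exists_pow_lt_orderOf [Finite G] {x y : G} (h : y ∈ zpowers x) :
    ∃ n, n < orderOf x ∧ x ^ n = y := by
  obtain ⟨n, hn⟩ := (Submonoid.mem_powers_iff _ _).mp (mem_powers_iff_mem_zpowers.mpr h)
  exact ⟨n % orderOf x, Nat.mod_lt _ (orderOf_pos x), (pow_mod_orderOf x n).trans hn⟩

lemma mem_of_cons_eq_append {α : Type*} {l1 l2 : List α} {x y : α}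
    (h : x :: l1 = l2 ++ [y]) (hl : l1 ≠ []) : y ∈ l1 := by
  cases l2 with
  | nil =>
    simp only [List.nil_append, List.cons.injEq] at h
    exact absurd h.2 hl
  | cons c t =>
    simp only [List.cons_append, List.cons.injEq] at h
    rw [h.2]
    simp

lemma exists_two_nbrs {V : Type*} {Γ : SimpleGraph V} {u : V} {w : Γ.Walk u u}
    (hw : w.IsCycle) :
    ∃ a b : V, a ≠ b ∧ Γ.Adj u a ∧ Γ.Adj u b ∧ a ∈ w.support ∧ b ∈ w.support := by
  have hlen := hw.three_le_length
  obtain ⟨a, ha, q, rfl⟩ := SimpleGraph.Walk.not_nil_iff.mp hw.not_nil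
  have hlq : 2 ≤ q.length := by
    simp only [SimpleGraph.Walk.length_cons] at hlen; omega
  have hnnrev : ¬ (SimpleGraph.Walk.cons ha q).reverse.Nil := by
    rw [SimpleGraph.Walk.nil_iff_length_eq, SimpleGraph.Walk.length_reverse]
    simp [SimpleGraph.Walk.length_cons]
  obtain ⟨b, hb, r, hrev⟩ := SimpleGraph.Walk.not_nil_iff.mp hnnrev
  refine ⟨a, b, ?_, ha, hb, ?_, ?_⟩
  · intro hab
    subst hab
    have hedges : (SimpleGraph.Walk.cons ha q).edges.reverse = s(u, a) :: r.edges := by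
      rw [← SimpleGraph.Walk.edges_reverse, hrev, SimpleGraph.Walk.edges_cons]
    have h2 : s(u, a) :: q.edges = r.edges.reverse ++ [s(u, a)] := by
      have h3 := congrArg List.reverse hedges
      rw [List.reverse_reverse, List.reverse_cons] at h3
      rw [← SimpleGraph.Walk.edges_cons ha q]
      exact h3
    have hq : q.edges ≠ [] := by
      intro h
      have := SimpleGraph.Walk.length_edges q
      rw [h] at this
      simp at this
      omega
    have hmem : s(u, a) ∈ q.edges := mem_of_cons_eq_append h2 hq
    have hnd := hw.isCircuit.isTrail.edges_nodup
    rw [SimpleGraph.Walk.edges_cons] at hnd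
    exact (List.nodup_cons.mp hnd).1 hmem
  · rw [SimpleGraph.Walk.support_cons]
    exact List.mem_cons_of_mem _ q.start_mem_support
  · have hbmem : b ∈ (SimpleGraph.Walk.cons ha q).reverse.support := by
      rw [hrev, SimpleGraph.Walk.support_cons]
      exact List.mem_cons_of_mem _ r.start_mem_support
    rw [SimpleGraph.Walk.support_reverse, List.mem_reverse] at hbmem
    exact hbmem

lemma exists_triangle {V : Type*} {Γ : SimpleGraph V} {a b c : V}
    (hab : Γ.Adj a b) (hbc : Γ.Adj b c) (hca : Γ.Adj c a) :
    ∃ w : Γ.Walk a a, w.IsCycle := by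
  refine ⟨SimpleGraph.Walk.cons hab (SimpleGraph.Walk.cons hbc
    (SimpleGraph.Walk.cons hca SimpleGraph.Walk.nil)), ?_⟩
  have h1 := hab.ne
  have h2 := hbc.ne
  have h3 := hca.ne
  rw [SimpleGraph.Walk.isCycle_def]
  refine ⟨?_, by simp, ?_⟩
  · rw [SimpleGraph.Walk.isTrail_def]
    simp only [SimpleGraph.Walk.edges_cons, SimpleGraph.Walk.edges_nil,
      List.nodup_cons, List.mem_cons, List.not_mem_nil, or_false, List.nodup_nil, and_true,
      List.mem_singleton, Sym2.eq_iff]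
    have h4 : b ≠ a := h1.symm
    have h5 : c ≠ b := h2.symm
    have h6 : a ≠ c := h3.symm
    aesop
  · simp only [SimpleGraph.Walk.support_cons, SimpleGraph.Walk.support_nil, List.tail_cons]
    have h4 : b ≠ a := h1.symm
    have h6 : a ≠ c := h3.symm
    simp [h2, h4, h6, h3]

lemma diff_ncard [Finite G] (M N : Subgroup G) :
    ((M : Set G) \ (N : Set G)).ncard = Nat.card M - Nat.card (M ⊓ N : Subgroup G) := by
  have h1 : ((M ⊓ N : Subgroup G) : Set G) ⊆ (M : Set G) :=
    SetLike.coe_subset_coe.mpr inf_le_left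
  have h2 : (M : Set G) \ ((M ⊓ N : Subgroup G) : Set G) = (M : Set G) \ (N : Set G) := by
    rw [Subgroup.coe_inf, Set.diff_self_inter]
  rw [← h2, Set.ncard_diff h1 (Set.toFinite _), ← Nat.card_coe_set_eq,
    ← Nat.card_coe_set_eq]
  rfl

lemma ppow_gap {p d m : ℕ} (hp : p.Prime) (hd : ∃ a, d = p ^ a) (hm : ∃ b, m = p ^ b)
    (hdvd : d ∣ m) (hne : d ≠ m) : d * p ≤ m := by
  obtain ⟨a, rfl⟩ := hd
  obtain ⟨b, rfl⟩ := hm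
  have hab : a ≤ b := (Nat.pow_dvd_pow_iff_le_right hp.one_lt).mp hdvd
  have hlt : a < b := lt_of_le_of_ne hab (fun h => hne (by rw [h]))
  calc p ^ a * p = p ^ (a + 1) := (pow_succ p a).symm
    _ ≤ p ^ b := Nat.pow_le_pow_right hp.pos (by omega)

end Helpers

/-- Theorem 1.1 for the enhanced power graph: characterization of finite p-groups
whose enhanced power graphs are cyclically separable. -/
theorem enhanced_power_graph_cyclically_separable_tfae
    (p : ℕ) (hp : p.Prime) (G : Type*) [Group G] [Finite G] (hG : IsPGroup p G) :
    List.TFAE [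
      CyclicallySeparable (enhancedPowerGraph G),
      3 ≤ diffNumber G,
      (3 < p ∧ ¬ IsCyclic G) ∨
      (p = 3 ∧ ∃ M N : Subgroup G, IsMaximalCyclic M ∧ IsMaximalCyclic N ∧ M ≠ N ∧
        3 < Nat.card M ∧ 3 < Nat.card N) ∨
      (p = 2 ∧ ((∃ M N : Subgroup G, IsMaximalCyclic M ∧ IsMaximalCyclic N ∧ M ≠ N ∧
          4 < Nat.card M ∧ 4 < Nat.card N) ∨
        (∃ M N : Subgroup G, IsMaximalCyclic M ∧ IsMaximalCyclic N ∧ M ≠ N ∧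
          2 < Nat.card M ∧ 2 < Nat.card N ∧ M ⊓ N = ⊥)))] := by
  haveI : Fact p.Prime := ⟨hp⟩
  have hdiff : diffNumber G = sSup { n : ℕ | ∃ M N : Subgroup G, IsMaximalCyclic M ∧
      IsMaximalCyclic N ∧
      n = min (((M : Set G) \ (N : Set G)).ncard) (((N : Set G) \ (M : Set G)).ncard) } := rfl
  have bdd : BddAbove { n : ℕ | ∃ M N : Subgroup G, IsMaximalCyclic M ∧ IsMaximalCyclic N ∧
      n = min (((M : Set G) \ (N : Set G)).ncard) (((N : Set G) \ (M : Set G)).ncard) } := by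
    refine ⟨Nat.card G, ?_⟩
    rintro n ⟨M, N, _, _, rfl⟩
    calc min (((M : Set G) \ (N : Set G)).ncard) (((N : Set G) \ (M : Set G)).ncard)
        ≤ ((M : Set G) \ (N : Set G)).ncard := min_le_left _ _
      _ ≤ (Set.univ : Set G).ncard := Set.ncard_le_ncard (Set.subset_univ _) Set.finite_univ
      _ = Nat.card G := Set.ncard_univ G
  have hcardpow : ∀ K : Subgroup G, ∃ n, Nat.card K = p ^ n := fun K =>
    IsPGroup.iff_card.mp (hG.to_subgroup K)
  have hcardpos : ∀ K : Subgroup G, 1 ≤ Nat.card K := by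
    intro K
    haveI : Nonempty ↥K := ⟨1⟩
    exact Nat.card_pos
  have hgap : ∀ M N : Subgroup G, IsMaximalCyclic M → IsMaximalCyclic N → M ≠ N →
      Nat.card (M ⊓ N : Subgroup G) * p ≤ Nat.card M := by
    intro M N hM hN hne
    refine ppow_gap hp (hcardpow _) (hcardpow _) (Subgroup.card_dvd_of_le inf_le_left) ?_
    intro heq
    have h1 : M ⊓ N = M := Subgroup.eq_of_le_of_card_ge inf_le_left (le_of_eq heq.symm)
    exact hne (hM.2 N hN.1 (inf_eq_left.mp h1))
  have adjK : ∀ (K : Subgroup G), (∃ g, K = zpowers g) → ∀ x y : G, x ∈ K → y ∈ K → x ≠ y →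
      (enhancedPowerGraph G).Adj x y := by
    rintro K ⟨g, rfl⟩ x y hx hy hne
    exact ⟨hne, g, hx, hy⟩
  have hfinal : ∀ M N : Subgroup G, IsMaximalCyclic M → IsMaximalCyclic N →
      3 ≤ ((M : Set G) \ (N : Set G)).ncard → 3 ≤ ((N : Set G) \ (M : Set G)).ncard →
      3 ≤ diffNumber G := by
    intro M N hM hN h1 h2
    rw [hdiff]
    exact le_trans (le_min h1 h2) (le_csSup bdd ⟨M, N, hM, hN, rfl⟩)
  tfae_have 3 → 2 := by
    rintro (⟨hp4, hnc⟩ | ⟨rfl, M, N, hM, hN, hne, hMc, hNc⟩ |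
      ⟨rfl, ⟨M, N, hM, hN, hne, hMc, hNc⟩ | ⟨M, N, hM, hN, hne, hMc, hNc, hint⟩⟩)
    · have hex : ∃ M N : Subgroup G, IsMaximalCyclic M ∧ IsMaximalCyclic N ∧ M ≠ N := by
        by_contra hcon
        push_neg at hcon
        obtain ⟨M0, hM0, hm0⟩ := exists_isMaximalCyclic_mem (1 : G)
        obtain ⟨g, hg⟩ := hM0.1
        refine hnc ⟨⟨g, fun x => ?_⟩⟩
        obtain ⟨Mx, hMx, hxm⟩ := exists_isMaximalCyclic_mem x
        show x ∈ zpowers g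
        rw [← hg, ← hcon Mx M0 hMx hM0]
        exact hxm
      obtain ⟨M, N, hM, hN, hne⟩ := hex
      apply hfinal M N hM hN
      · rw [diff_ncard]
        have g1 := hgap M N hM hN hne
        have g2 := hcardpos (M ⊓ N)
        have g3 : Nat.card (M ⊓ N : Subgroup G) * 4 ≤ Nat.card (M ⊓ N : Subgroup G) * p :=
          Nat.mul_le_mul_left _ (by omega)
        omega
      · rw [diff_ncard]
        have g1 := hgap N M hN hM hne.symm
        have g2 := hcardpos (N ⊓ M)
        have g3 : Nat.card (N ⊓ M : Subgroup G) * 4 ≤ Nat.card (N ⊓ M : Subgroup G) * p :=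
          Nat.mul_le_mul_left _ (by omega)
        omega
    · have h9 : ∀ K : Subgroup G, 3 < Nat.card K → 9 ≤ Nat.card K := by
        intro K hK
        obtain ⟨b, hb⟩ := hcardpow K
        rw [hb] at hK ⊢
        rcases Nat.lt_or_ge b 2 with h | h
        · interval_cases b <;> omega
        · calc (9:ℕ) = 3 ^ 2 := rfl
            _ ≤ 3 ^ b := Nat.pow_le_pow_right (by norm_num) h
      apply hfinal M N hM hN
      · rw [diff_ncard]
        have g1 := hgap M N hM hN hne
        have g2 := h9 M hMc
        omega
      · rw [diff_ncard]
        have g1 := hgap N M hN hM hne.symm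
        have g2 := h9 N hNc
        omega
    · have h8 : ∀ K : Subgroup G, 4 < Nat.card K → 8 ≤ Nat.card K := by
        intro K hK
        obtain ⟨b, hb⟩ := hcardpow K
        rw [hb] at hK ⊢
        rcases Nat.lt_or_ge b 3 with h | h
        · interval_cases b <;> omega
        · calc (8:ℕ) = 2 ^ 3 := rfl
            _ ≤ 2 ^ b := Nat.pow_le_pow_right (by norm_num) h
      apply hfinal M N hM hN
      · rw [diff_ncard]
        have g1 := hgap M N hM hN hne
        have g2 := h8 M hMc
        omega
      · rw [diff_ncard]
        have g1 := hgap N M hN hM hne.symm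
        have g2 := h8 N hNc
        omega
    · have h4 : ∀ K : Subgroup G, 2 < Nat.card K → 4 ≤ Nat.card K := by
        intro K hK
        obtain ⟨b, hb⟩ := hcardpow K
        rw [hb] at hK ⊢
        rcases Nat.lt_or_ge b 2 with h | h
        · interval_cases b <;> omega
        · calc (4:ℕ) = 2 ^ 2 := rfl
            _ ≤ 2 ^ b := Nat.pow_le_pow_right (by norm_num) h
      have hint' : N ⊓ M = ⊥ := by rw [inf_comm]; exact hint
      apply hfinal M N hM hN
      · rw [diff_ncard, hint, Subgroup.card_bot]
        have g2 := h4 M hMc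
        omega
      · rw [diff_ncard, hint', Subgroup.card_bot]
        have g2 := h4 N hNc
        omega
  tfae_have 2 → 1 := by
    intro h2
    obtain ⟨M0, hM0, _⟩ := exists_isMaximalCyclic_mem (1 : G)
    have hne0 : Set.Nonempty { n : ℕ | ∃ M N : Subgroup G, IsMaximalCyclic M ∧
        IsMaximalCyclic N ∧
        n = min (((M : Set G) \ (N : Set G)).ncard) (((N : Set G) \ (M : Set G)).ncard) } :=
      ⟨0, M0, M0, hM0, hM0, by simp⟩
    have hmem := Nat.sSup_mem hne0 bdd
    obtain ⟨M, N, hM, hN, heq⟩ := hmem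
    rw [hdiff, heq] at h2
    have hMN3 : 3 ≤ ((M : Set G) \ (N : Set G)).ncard := le_trans h2 (min_le_left _ _)
    have hNM3 : 3 ≤ ((N : Set G) \ (M : Set G)).ncard := le_trans h2 (min_le_right _ _)
    obtain ⟨t1, ht1s, ht1c⟩ := Set.exists_subset_card_eq hMN3
    obtain ⟨a, b, c, hab, hac, hbc, rfl⟩ := Set.ncard_eq_three.mp ht1c
    obtain ⟨t2, ht2s, ht2c⟩ := Set.exists_subset_card_eq hNM3
    obtain ⟨d, e, f, hde, hdf, hef, rfl⟩ := Set.ncard_eq_three.mp ht2c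
    have haM : a ∈ (M : Set G) \ (N : Set G) := ht1s (by simp)
    have hbM : b ∈ (M : Set G) \ (N : Set G) := ht1s (by simp)
    have hcM : c ∈ (M : Set G) \ (N : Set G) := ht1s (by simp)
    have hdN : d ∈ (N : Set G) \ (M : Set G) := ht2s (by simp)
    have heN : e ∈ (N : Set G) \ (M : Set G) := ht2s (by simp)
    have hfN : f ∈ (N : Set G) \ (M : Set G) := ht2s (by simp)
    set X : Set G := ((M : Set G) \ (N : Set G)) ∪ ((N : Set G) \ (M : Set G)) with hXdef
    have hXc : Xᶜᶜ = X := compl_compl X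
    have hmemX : ∀ {x : G}, x ∈ X → x ∈ Xᶜᶜ := fun hx => by simpa using hx
    have hxmem : ∀ (x : ↥(Xᶜᶜ)), (x : G) ∈ X := fun x => by simpa using x.2
    let va : ↥(Xᶜᶜ) := ⟨a, hmemX (Or.inl haM)⟩
    let vb : ↥(Xᶜᶜ) := ⟨b, hmemX (Or.inl hbM)⟩
    let vc : ↥(Xᶜᶜ) := ⟨c, hmemX (Or.inl hcM)⟩
    let vd : ↥(Xᶜᶜ) := ⟨d, hmemX (Or.inr hdN)⟩
    let ve : ↥(Xᶜᶜ) := ⟨e, hmemX (Or.inr heN)⟩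
    let vf : ↥(Xᶜᶜ) := ⟨f, hmemX (Or.inr hfN)⟩
    have hcross : ∀ x y : G, x ∈ (M : Set G) \ (N : Set G) → y ∈ (N : Set G) \ (M : Set G) →
        ¬ (enhancedPowerGraph G).Adj x y := by
      intro x y hx hy hadj
      rcases (epg_adj_iff hp hG).mp hadj with ⟨-, h | h⟩
      · exact hx.2 ((zpowers_le.mpr hy.1) h)
      · exact hy.2 ((zpowers_le.mpr hx.1) h)
    have hstay : ∀ (x y : ↥(Xᶜᶜ)) (w : ((enhancedPowerGraph G).induce Xᶜᶜ).Walk x y),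
        (x : G) ∈ (M : Set G) \ (N : Set G) → (y : G) ∈ (M : Set G) \ (N : Set G) := by
      intro x y w
      induction w with
      | nil => exact id
      | @cons x' c' y' h q ih =>
        intro hx
        apply ih
        have hcc : (c' : G) ∈ X := hxmem c'
        rcases hcc with h1 | h1
        · exact h1
        · exact absurd (h : (enhancedPowerGraph G).Adj ↑x' ↑c') (hcross _ _ hx h1)
    have hnr : ¬ ((enhancedPowerGraph G).induce Xᶜᶜ).Reachable va vd := by
      rintro ⟨w⟩
      exact hdN.2 (hstay va vd w haM).1
    obtain ⟨gM, hgM⟩ := hM.1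
    obtain ⟨gN, hgN⟩ := hN.1
    have iadjM : ∀ (x y : ↥(Xᶜᶜ)), (x : G) ∈ (M : Set G) \ (N : Set G) →
        (y : G) ∈ (M : Set G) \ (N : Set G) → (x : G) ≠ (y : G) →
        ((enhancedPowerGraph G).induce Xᶜᶜ).Adj x y := by
      intro x y hx hy hne
      exact (adjK M ⟨gM, hgM⟩ _ _ hx.1 hy.1 hne :
        (enhancedPowerGraph G).Adj (x : G) (y : G))
    have iadjN : ∀ (x y : ↥(Xᶜᶜ)), (x : G) ∈ (N : Set G) \ (M : Set G) →
        (y : G) ∈ (N : Set G) \ (M : Set G) → (x : G) ≠ (y : G) →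
        ((enhancedPowerGraph G).induce Xᶜᶜ).Adj x y := by
      intro x y hx hy hne
      exact (adjK N ⟨gN, hgN⟩ _ _ hx.1 hy.1 hne :
        (enhancedPowerGraph G).Adj (x : G) (y : G))
    refine ⟨Xᶜ, fun hc => hnr (hc.preconnected va vd), va, vd, hnr, ?_, ?_⟩
    · exact exists_triangle (iadjM va vb haM hbM hab) (iadjM vb vc hbM hcM hbc)
        (iadjM vc va hcM haM (Ne.symm hac))
    · exact exists_triangle (iadjN vd ve hdN heN hde) (iadjN ve vf heN hfN hef)
        (iadjN vf vd hfN hdN (Ne.symm hdf))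
  tfae_have 1 → 3 := by
    classical
    intro h1
    obtain ⟨S, hdis, u, v, hRuv, ⟨wu, hwu⟩, ⟨wv, hwv⟩⟩ := h1
    have h1S : (1 : G) ∉ Sᶜ := by
      intro h1c
      apply hdis
      haveI : Nonempty ↥Sᶜ := ⟨u⟩
      refine ⟨fun x y => ?_⟩
      have reach1 : ∀ z : ↥Sᶜ, ((enhancedPowerGraph G).induce Sᶜ).Reachable z ⟨1, h1c⟩ := by
        intro z
        by_cases hz : z = ⟨1, h1c⟩
        · rw [hz]
        · refine SimpleGraph.Adj.reachable ?_
          exact (⟨fun h => hz (Subtype.ext h), (z : G), mem_zpowers _, one_mem _⟩ :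
            (enhancedPowerGraph G).Adj (z : G) 1)
      exact (reach1 x).trans (reach1 y).symm
    have hne1 : ∀ z : ↥Sᶜ, (z : G) ≠ 1 := fun z hz => h1S (hz ▸ z.2)
    have bridge : ∀ (u' v' : ↥Sᶜ), ¬((enhancedPowerGraph G).induce Sᶜ).Reachable u' v' →
        ∀ (t s : ↥Sᶜ) (K : Subgroup G), (∃ g, K = zpowers g) → (t : G) ∈ K → (s : G) ∈ K →
        ((enhancedPowerGraph G).induce Sᶜ).Reachable u' t →
        ((enhancedPowerGraph G).induce Sᶜ).Reachable v' s → False := by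
      intro u' v' hnr t s K hK ht hs hrt hrs
      by_cases hts : t = s
      · rw [hts] at hrt
        exact hnr (hrt.trans hrs.symm)
      · have hadj : (enhancedPowerGraph G).Adj (t : G) (s : G) :=
          adjK K hK _ _ ht hs (fun h => hts (Subtype.ext h))
        have hadj' : ((enhancedPowerGraph G).induce Sᶜ).Adj t s := hadj
        exact hnr ((hrt.trans hadj'.reachable).trans hrs.symm)
    have reach_sup : ∀ {x y : ↥Sᶜ} (w : ((enhancedPowerGraph G).induce Sᶜ).Walk x x),
        y ∈ w.support → ((enhancedPowerGraph G).induce Sᶜ).Reachable x y :=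
      fun w hb => ⟨w.takeUntil _ hb⟩
    rcases lt_or_ge 3 p with hp3 | hp3
    · left
      refine ⟨hp3, fun hcyc => ?_⟩
      obtain ⟨g, hg⟩ := @IsCyclic.exists_generator G _ hcyc
      exact bridge u v hRuv u v (zpowers g) ⟨g, rfl⟩ (hg _) (hg _)
        (SimpleGraph.Reachable.refl u) (SimpleGraph.Reachable.refl v)
    · have hple := hp.two_le
      interval_cases p
      · -- p = 2
        right; right
        refine ⟨rfl, ?_⟩
        by_contra hcon
        rw [not_or] at hcon
        obtain ⟨hbig, htriv⟩ := hcon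
        push_neg at hbig htriv
        have horder : ∀ z : ↥Sᶜ, ∃ k, orderOf (z : G) = 2 ^ k := fun z =>
          IsPGroup.iff_orderOf.mp hG _
        have ord_ge : ∀ z : ↥Sᶜ, orderOf (z : G) ≠ 2 → 4 ≤ orderOf (z : G) := by
          intro z h2o
          obtain ⟨k, hk⟩ := horder z
          have hk0 : k ≠ 0 := fun h => by
            rw [h, pow_zero, orderOf_eq_one_iff] at hk; exact hne1 z hk
          have hk1 : k ≠ 1 := fun h => h2o (by rw [hk, h, pow_one])
          rw [hk]
          calc (4:ℕ) = 2 ^ 2 := rfl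
            _ ≤ 2 ^ k := Nat.pow_le_pow_right (by norm_num) (by omega)
        have nbr_big : ∀ (u' z : ↥Sᶜ), orderOf (u' : G) = 2 →
            ((enhancedPowerGraph G).induce Sᶜ).Adj u' z → 4 ≤ orderOf (z : G) := by
          intro u' z hu2 hadj'
          apply ord_ge
          intro hz2
          have hadj : (enhancedPowerGraph G).Adj (u' : G) (z : G) := hadj'
          obtain ⟨hne', hcmp⟩ := (epg_adj_iff hp hG).mp hadj
          have hmemz : (z : G) ∈ zpowers (u' : G) := by
            rcases hcmp with h | h
            · have heqz : zpowers (u' : G) = zpowers (z : G) :=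
                Subgroup.eq_of_le_of_card_ge (zpowers_le.mpr h)
                  (by rw [Nat.card_zpowers, Nat.card_zpowers, hu2, hz2])
              rw [heqz]; exact mem_zpowers _
            · exact h
          obtain ⟨n, hn, hpow⟩ := exists_pow_lt_orderOf hmemz
          rw [hu2] at hn
          interval_cases n
          · rw [pow_zero] at hpow; exact hne1 z hpow.symm
          · rw [pow_one] at hpow; exact hne' hpow
        have step : ∀ (u' : ↥Sᶜ) (w : ((enhancedPowerGraph G).induce Sᶜ).Walk u' u'),
            w.IsCycle → ∃ x : ↥Sᶜ, x ∈ w.support ∧ 4 ≤ orderOf (x : G) := by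
          intro u' w hw
          obtain ⟨A, B, hABne, huA, huB, hsA, hsB⟩ := exists_two_nbrs hw
          by_cases h4 : 4 ≤ orderOf (u' : G)
          · exact ⟨u', w.start_mem_support, h4⟩
          have hu2 : orderOf (u' : G) = 2 := by
            obtain ⟨k, hk⟩ := horder u'
            have hk0 : k ≠ 0 := fun h => by
              rw [h, pow_zero, orderOf_eq_one_iff] at hk; exact hne1 u' hk
            have hk2 : k < 2 := by
              by_contra hge
              push_neg at hge
              exact h4 (by rw [hk]; calc (4:ℕ) = 2 ^ 2 := rfl
                _ ≤ 2 ^ k := Nat.pow_le_pow_right (by norm_num) hge)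
            interval_cases k
            · exact absurd rfl hk0
            · simpa using hk
          exact ⟨A, hsA, nbr_big u' A hu2 huA⟩
        obtain ⟨xu, hsu, hxu⟩ := step u wu hwu
        obtain ⟨xv, hsv, hxv⟩ := step v wv hwv
        have hru : ((enhancedPowerGraph G).induce Sᶜ).Reachable u xu := reach_sup wu hsu
        have hrv : ((enhancedPowerGraph G).induce Sᶜ).Reachable v xv := reach_sup wv hsv
        obtain ⟨Mu, hMu, hmu⟩ := exists_isMaximalCyclic_mem (xu : G)
        obtain ⟨Mv, hMv, hmv⟩ := exists_isMaximalCyclic_mem (xv : G)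
        have hcu : 4 ≤ Nat.card Mu := le_trans hxu
          (by rw [← Nat.card_zpowers]; exact Subgroup.card_le_of_le (zpowers_le.mpr hmu))
        have hcv : 4 ≤ Nat.card Mv := le_trans hxv
          (by rw [← Nat.card_zpowers]; exact Subgroup.card_le_of_le (zpowers_le.mpr hmv))
        have hMne : Mu ≠ Mv := fun h =>
          bridge u v hRuv xu xv Mv hMv.1 (h ▸ hmu) hmv hru hrv
        have side : ∀ (u' v' xu' xv' : ↥Sᶜ)
            (w' : ((enhancedPowerGraph G).induce Sᶜ).Walk u' u') (Mu' Mv' : Subgroup G),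
            ¬((enhancedPowerGraph G).induce Sᶜ).Reachable u' v' → w'.IsCycle →
            xu' ∈ w'.support → 4 ≤ orderOf (xu' : G) →
            IsMaximalCyclic Mu' → (xu' : G) ∈ Mu' → Nat.card Mu' ≤ 4 →
            IsMaximalCyclic Mv' → (xv' : G) ∈ Mv' → 4 ≤ orderOf (xv' : G) → Mu' ≠ Mv' →
            ((enhancedPowerGraph G).induce Sᶜ).Reachable v' xv' → False := by
          intro u' v' xu' xv' w' Mu' Mv' hnr hw' hxs hx4 hMu' hmu' hMu'le hMv' hmv' hxv4
            hne' hrv'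
          have hru' : ((enhancedPowerGraph G).induce Sᶜ).Reachable u' xu' := reach_sup w' hxs
          have hcu' : orderOf (xu' : G) ≤ Nat.card Mu' := by
            rw [← Nat.card_zpowers]; exact Subgroup.card_le_of_le (zpowers_le.mpr hmu')
          have h14 : Nat.card Mu' = 4 := le_antisymm hMu'le (le_trans hx4 hcu')
          have h2eq : zpowers (xu' : G) = Mu' :=
            Subgroup.eq_of_le_of_card_ge (zpowers_le.mpr hmu')
              (by rw [Nat.card_zpowers, h14]; exact hx4)
          have ho4 : orderOf (xu' : G) = 4 := by rw [← Nat.card_zpowers, h2eq, h14]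
          have hrot := hw'.rotate hxs
          obtain ⟨A, B, hABne, hxA, hxB, _, _⟩ := exists_two_nbrs hrot
          have hnbr : ∀ z : ↥Sᶜ, ((enhancedPowerGraph G).induce Sᶜ).Adj xu' z →
              (z : G) ∈ zpowers (xu' : G) := by
            intro z hz
            have hadj : (enhancedPowerGraph G).Adj (xu' : G) (z : G) := hz
            obtain ⟨hne'', hcmp⟩ := (epg_adj_iff hp hG).mp hadj
            rcases hcmp with h | h
            · have hle2 : Mu' ≤ zpowers (z : G) := by
                rw [← h2eq]; exact zpowers_le.mpr h
              have := hMu'.2 (zpowers (z : G)) ⟨_, rfl⟩ hle2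
              rw [h2eq, this]
              exact mem_zpowers _
            · exact h
          obtain ⟨na, hna, hpa⟩ := exists_pow_lt_orderOf (hnbr A hxA)
          obtain ⟨nb, hnb, hpb⟩ := exists_pow_lt_orderOf (hnbr B hxB)
          rw [ho4] at hna hnb
          have hA1 : (A : G) ≠ 1 := hne1 A
          have hB1 : (B : G) ≠ 1 := hne1 B
          have hadjA : (enhancedPowerGraph G).Adj (xu' : G) (A : G) := hxA
          have hadjB : (enhancedPowerGraph G).Adj (xu' : G) (B : G) := hxB
          have hAx : (A : G) ≠ (xu' : G) := fun h => hadjA.ne h.symm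
          have hBx : (B : G) ≠ (xu' : G) := fun h => hadjB.ne h.symm
          have hna2 : na = 2 ∨ na = 3 := by
            rcases Nat.lt_or_ge na 2 with h | h
            · interval_cases na
              · rw [pow_zero] at hpa; exact absurd hpa.symm hA1
              · rw [pow_one] at hpa; exact absurd hpa.symm hAx
            · omega
          have hnb2 : nb = 2 ∨ nb = 3 := by
            rcases Nat.lt_or_ge nb 2 with h | h
            · interval_cases nb
              · rw [pow_zero] at hpb; exact absurd hpb.symm hB1
              · rw [pow_one] at hpb; exact absurd hpb.symm hBx
            · omega
          have hnanb : na ≠ nb := fun h => hABne (Subtype.ext (by rw [← hpa, ← hpb, h]))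
          have henum : ∀ g : G, g ∈ zpowers (xu' : G) → g ≠ 1 →
              ∃ t : ↥Sᶜ, (t : G) = g ∧ ((enhancedPowerGraph G).induce Sᶜ).Reachable u' t := by
            intro g hg hg1
            obtain ⟨n, hn, hpg⟩ := exists_pow_lt_orderOf hg
            rw [ho4] at hn
            have hn0 : n ≠ 0 := fun h => hg1 (by rw [← hpg, h, pow_zero])
            rcases (show n = 1 ∨ n = na ∨ n = nb by omega) with h | h | h
            · exact ⟨xu', by rw [← hpg, h, pow_one], hru'⟩
            · exact ⟨A, by rw [← hpg, ← hpa, h], hru'.trans hxA.reachable⟩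
            · exact ⟨B, by rw [← hpg, ← hpb, h], hru'.trans hxB.reachable⟩
          have hint : zpowers (xu' : G) ⊓ Mv' ≠ ⊥ := by
            apply htriv (zpowers (xu' : G)) Mv' (by rw [h2eq]; exact hMu') hMv'
              (by rw [h2eq]; exact hne')
            · rw [Nat.card_zpowers, ho4]; omega
            · have hcv' : orderOf (xv' : G) ≤ Nat.card Mv' := by
                rw [← Nat.card_zpowers]; exact Subgroup.card_le_of_le (zpowers_le.mpr hmv')
              omega
          rcases (zpowers (xu' : G) ⊓ Mv').bot_or_exists_ne_one with h | ⟨cc, hccmem, hcc1⟩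
          · exact hint h
          · obtain ⟨t, htval, hrt⟩ := henum cc (Subgroup.mem_inf.mp hccmem).1 hcc1
            exact bridge u' v' hnr t xv' Mv' hMv'.1 (htval ▸ (Subgroup.mem_inf.mp hccmem).2)
              hmv' hrt hrv'
        rcases le_or_gt (Nat.card Mu) 4 with hle | hlt
        · exact side u v xu xv wu Mu Mv hRuv hwu hsu hxu hMu hmu hle hMv hmv hxv hMne hrv
        · have hle' : Nat.card Mv ≤ 4 := hbig Mu Mv hMu hMv hMne hlt
          exact side v u xv xu wv Mv Mu (fun h => hRuv h.symm) hwv hsv hxv hMv hmv hle'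
            hMu hmu hxu hMne.symm hru
      · -- p = 3
        right; left
        refine ⟨rfl, ?_⟩
        have horder : ∀ z : ↥Sᶜ, ∃ k, orderOf (z : G) = 3 ^ k := fun z =>
          IsPGroup.iff_orderOf.mp hG _
        have step : ∀ (u' : ↥Sᶜ) (w : ((enhancedPowerGraph G).induce Sᶜ).Walk u' u'),
            w.IsCycle → ∃ x : ↥Sᶜ, ((enhancedPowerGraph G).induce Sᶜ).Reachable u' x ∧
            9 ≤ orderOf (x : G) := by
          intro u' w hw
          obtain ⟨A, B, hABne, huA, huB, _, _⟩ := exists_two_nbrs hw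
          by_cases h9 : 9 ≤ orderOf (u' : G)
          · exact ⟨u', SimpleGraph.Reachable.refl u', h9⟩
          have hu3 : orderOf (u' : G) = 3 := by
            obtain ⟨k, hk⟩ := horder u'
            have hk0 : k ≠ 0 := fun h => by
              rw [h, pow_zero, orderOf_eq_one_iff] at hk; exact hne1 u' hk
            have hk2 : k < 2 := by
              by_contra hge
              push_neg at hge
              exact h9 (by rw [hk]; calc (9:ℕ) = 3 ^ 2 := rfl
                _ ≤ 3 ^ k := Nat.pow_le_pow_right (by norm_num) hge)
            interval_cases k
            · exact absurd rfl hk0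
            · simpa using hk
          have big : ∀ z : ↥Sᶜ, orderOf (z : G) ≠ 3 →
              ((enhancedPowerGraph G).induce Sᶜ).Adj u' z → 9 ≤ orderOf (z : G) := by
            intro z h3 _
            obtain ⟨k, hk⟩ := horder z
            have hk0 : k ≠ 0 := fun h => by
              rw [h, pow_zero, orderOf_eq_one_iff] at hk; exact hne1 z hk
            have hk1 : k ≠ 1 := fun h => h3 (by rw [hk, h, pow_one])
            rw [hk]
            calc (9:ℕ) = 3 ^ 2 := rfl
              _ ≤ 3 ^ k := Nat.pow_le_pow_right (by norm_num) (by omega)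
          have key3 : ∀ z : ↥Sᶜ, ((enhancedPowerGraph G).induce Sᶜ).Adj u' z →
              orderOf (z : G) = 3 → (z : G) = (u' : G) ^ 2 := by
            intro z hzadj h3
            have hadj : (enhancedPowerGraph G).Adj (u' : G) (z : G) := hzadj
            obtain ⟨hne', hcmp⟩ := (epg_adj_iff hp hG).mp hadj
            have hmemz : (z : G) ∈ zpowers (u' : G) := by
              rcases hcmp with h | h
              · have heqz : zpowers (u' : G) = zpowers (z : G) :=
                  Subgroup.eq_of_le_of_card_ge (zpowers_le.mpr h)
                    (by rw [Nat.card_zpowers, Nat.card_zpowers, hu3, h3])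
                rw [heqz]; exact mem_zpowers _
              · exact h
            obtain ⟨n, hn, hpow⟩ := exists_pow_lt_orderOf hmemz
            rw [hu3] at hn
            interval_cases n
            · rw [pow_zero] at hpow; exact absurd hpow.symm (hne1 z)
            · rw [pow_one] at hpow; exact absurd hpow hne'
            · exact hpow.symm
          by_cases hA3 : orderOf (A : G) = 3
          · by_cases hB3 : orderOf (B : G) = 3
            · exact absurd (Subtype.ext ((key3 A huA hA3).trans (key3 B huB hB3).symm)) hABne
            · exact ⟨B, huB.reachable, big B hB3 huB⟩
          · exact ⟨A, huA.reachable, big A hA3 huA⟩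
        obtain ⟨xu, hru, hxu⟩ := step u wu hwu
        obtain ⟨xv, hrv, hxv⟩ := step v wv hwv
        obtain ⟨Mu, hMu, hmu⟩ := exists_isMaximalCyclic_mem (xu : G)
        obtain ⟨Mv, hMv, hmv⟩ := exists_isMaximalCyclic_mem (xv : G)
        have hcu : 9 ≤ Nat.card Mu := le_trans hxu
          (by rw [← Nat.card_zpowers]; exact Subgroup.card_le_of_le (zpowers_le.mpr hmu))
        have hcv : 9 ≤ Nat.card Mv := le_trans hxv
          (by rw [← Nat.card_zpowers]; exact Subgroup.card_le_of_le (zpowers_le.mpr hmv))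
        refine ⟨Mu, Mv, hMu, hMv, fun h => ?_, by omega, by omega⟩
        exact bridge u v hRuv xu xv Mv hMv.1 (h ▸ hmu) hmv hru hrv
  tfae_finish
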